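/- For every a > 0 and every natural number d ≥ 0, the best uniform approximation error of g(x) = e^{a(x-1)} on [-1,1] by polynomials of degree at most d satisfies E_d(g) ≥ (π·e^{-a}/2) · (a/2)^{d+1} / (d+1)!. -/

import Mathlib

/-- The best uniform approximation error on `[-1, 1]` of `f` by real polynomials of degree
at most `d`. -/
noncomputable def bestApproxError (f : ℝ → ℝ) (d : ℕ) : ℝ :=
  ⨅ p : {p : Polynomial ℝ // p.natDegree ≤ d},
    ⨆ x : Set.Icc (-1:ℝ) 1, |f (x : ℝ) - (p : Polynomial ℝ).eval (x : ℝ)|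


open Real intervalIntegral MeasureTheory

noncomputable def chebJ (k n : ℕ) : ℝ := ∫ θ in (0:ℝ)..π, Real.cos θ ^ k * Real.cos (n * θ)

lemma chebJ_cont (k n : ℕ) : Continuous fun θ : ℝ => Real.cos θ ^ k * Real.cos (n * θ) := by
  continuity

lemma chebJ_integrable (k n : ℕ) (a b : ℝ) :
    IntervalIntegrable (fun θ : ℝ => Real.cos θ ^ k * Real.cos (n * θ)) volume a b :=
  (chebJ_cont k n).intervalIntegrable a b

lemma chebJ_zero_left (n : ℕ) (hn : 1 ≤ n) : chebJ 0 n = 0 := by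
  have hn' : (n : ℝ) ≠ 0 := Nat.cast_ne_zero.mpr (by omega)
  simp only [chebJ, pow_zero, one_mul]
  rw [intervalIntegral.integral_comp_mul_left (f := Real.cos) hn']
  simp [Real.sin_nat_mul_pi]

lemma chebJ_rec (k m : ℕ) :
    chebJ (k + 1) (m + 1) = (chebJ k (m + 2) + chebJ k m) / 2 := by
  have key : ∀ θ : ℝ, Real.cos θ ^ (k+1) * Real.cos ((m+1 : ℕ) * θ)
      = (Real.cos θ ^ k * Real.cos ((m+2 : ℕ) * θ) + Real.cos θ ^ k * Real.cos ((m : ℕ) * θ)) / 2 := by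
    intro θ
    have h1 : ((m+2 : ℕ) : ℝ) * θ = ((m+1 : ℕ) : ℝ) * θ + θ := by push_cast; ring
    have h2 : ((m : ℕ) : ℝ) * θ = ((m+1 : ℕ) : ℝ) * θ - θ := by push_cast; ring
    rw [h1, h2, Real.cos_add, Real.cos_sub]
    ring
  unfold chebJ
  rw [intervalIntegral.integral_congr (g := fun θ => (Real.cos θ ^ k * Real.cos ((m+2 : ℕ) * θ) + Real.cos θ ^ k * Real.cos ((m : ℕ) * θ)) / 2) (fun θ _ => key θ)]
  rw [intervalIntegral.integral_div, intervalIntegral.integral_add (chebJ_integrable k (m+2) 0 π) (chebJ_integrable k m 0 π)]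

lemma integral_cos_pow_nonneg (k : ℕ) : 0 ≤ ∫ θ in (0:ℝ)..π, Real.cos θ ^ k := by
  induction k using Nat.strong_induction_on with
  | _ k ih =>
    match k with
    | 0 => simp [Real.pi_nonneg]
    | 1 => simp
    | (n+2) =>
      rw [integral_cos_pow]
      simp only [Real.sin_pi, Real.sin_zero, mul_zero, zero_sub, mul_zero, neg_zero, zero_div,
        zero_add]
      have := ih n (by omega)
      positivity

lemma chebJ_zero_right_nonneg (k : ℕ) : 0 ≤ chebJ k 0 := by
  simpa [chebJ] using integral_cos_pow_nonneg k

lemma chebJ_nonneg (k n : ℕ) : 0 ≤ chebJ k n := by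
  induction k generalizing n with
  | zero =>
    match n with
    | 0 => simpa [chebJ] using Real.pi_nonneg
    | (m+1) => rw [chebJ_zero_left (m+1) (by omega)]
  | succ k ih =>
    match n with
    | 0 => exact chebJ_zero_right_nonneg (k+1)
    | (m+1) =>
      rw [chebJ_rec]
      have h1 := ih (m+2)
      have h2 := ih m
      positivity

lemma chebJ_eq_zero (k n : ℕ) (h : k < n) : chebJ k n = 0 := by
  induction k generalizing n with
  | zero => exact chebJ_zero_left n h
  | succ k ih =>
    match n, h with
    | (m+1), h =>
      rw [chebJ_rec, ih (m+2) (by omega), ih m (by omega)]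
      norm_num

lemma chebJ_diag (k : ℕ) : π / 2 ^ k ≤ chebJ k k := by
  induction k with
  | zero => simp [chebJ]
  | succ k ih =>
    rw [chebJ_rec]
    have h1 := chebJ_nonneg k (k+2)
    have : π / 2 ^ (k+1) ≤ chebJ k k / 2 := by
      rw [pow_succ]
      calc π / (2^k * 2) = (π / 2^k) / 2 := by ring
      _ ≤ chebJ k k / 2 := by linarith
    linarith

lemma abs_cos_periodic : Function.Periodic (fun x : ℝ => |Real.cos x|) π := by
  intro x
  simp [Real.cos_add_pi]

lemma integral_abs_cos : ∫ x in (0:ℝ)..π, |Real.cos x| = 2 := by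
  have h1 : ∫ x in (0:ℝ)..(π/2), |Real.cos x| = 1 := by
    rw [intervalIntegral.integral_congr (g := Real.cos)]
    · simp
    · intro x hx
      rw [Set.uIcc_of_le (by positivity)] at hx
      have hp := Real.pi_pos
      exact abs_of_nonneg (Real.cos_nonneg_of_mem_Icc ⟨by linarith [hx.1], hx.2⟩)
  have h2 : ∫ x in (π/2:ℝ)..π, |Real.cos x| = 1 := by
    rw [intervalIntegral.integral_congr (g := fun x => -Real.cos x)]
    · simp
    · intro x hx
      rw [Set.uIcc_of_le (by linarith [Real.pi_pos])] at hx
      show |Real.cos x| = -Real.cos x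
      rw [abs_of_nonpos]
      exact Real.cos_nonpos_of_pi_div_two_le_of_le hx.1 (by linarith [hx.2, Real.pi_pos])
  have := intervalIntegral.integral_add_adjacent_intervals
    (μ := volume) (a := (0:ℝ)) (b := π/2) (c := π) (f := fun x => |Real.cos x|)
    ((continuous_abs.comp Real.continuous_cos).intervalIntegrable _ _)
    ((continuous_abs.comp Real.continuous_cos).intervalIntegrable _ _)
  rw [h1, h2] at this
  linarith

lemma integral_abs_cos_nat_mul (n : ℕ) (hn : 1 ≤ n) :
    ∫ θ in (0:ℝ)..π, |Real.cos (n * θ)| = 2 := by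
  have hn' : (n : ℝ) ≠ 0 := Nat.cast_ne_zero.mpr (by omega)
  rw [intervalIntegral.integral_comp_mul_left (f := fun u => |Real.cos u|) hn']
  have key : ∫ x in (0:ℝ)..((n:ℤ) • π), |Real.cos x| = (n:ℤ) • ∫ x in (0:ℝ)..π, |Real.cos x| := by
    have := abs_cos_periodic.intervalIntegral_add_zsmul_eq (n:ℤ) 0
      (fun t₁ t₂ => (continuous_abs.comp Real.continuous_cos).intervalIntegrable t₁ t₂)
    simpa using this
  have h0 : (n:ℝ) * 0 = (0:ℝ) := by ring
  rw [h0]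
  have h1 : (n:ℝ) * π = ((n:ℤ) • π) := by rw [zsmul_eq_mul]; push_cast; ring
  rw [h1, key, integral_abs_cos]
  simp
  field_simp

lemma exp_cos_integral_ge (a : ℝ) (ha : 0 < a) (n : ℕ) :
    π * (a / 2) ^ n / (n.factorial : ℝ) ≤
      ∫ θ in (0:ℝ)..π, Real.exp (a * Real.cos θ) * Real.cos (n * θ) := by
  set F : ℕ → ℝ → ℝ := fun k θ => a ^ k / (k.factorial : ℝ) * (Real.cos θ ^ k * Real.cos (n * θ))
    with hF
  have hFcont : ∀ k, Continuous (F k) := fun k => continuous_const.mul (chebJ_cont k n)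
  have hsum : HasSum (fun k => ∫ θ in (0:ℝ)..π, F k θ)
      (∫ θ in (0:ℝ)..π, Real.exp (a * Real.cos θ) * Real.cos (n * θ)) := by
    apply intervalIntegral.hasSum_integral_of_dominated_convergence
      (bound := fun k _ => a ^ k / (k.factorial : ℝ))
    · exact fun k => (hFcont k).aestronglyMeasurable
    · intro k
      filter_upwards with θ _
      have h1 : |Real.cos θ ^ k * Real.cos (n * θ)| ≤ 1 := by
        rw [abs_mul, abs_pow]
        have := Real.abs_cos_le_one θ
        have := Real.abs_cos_le_one ((n:ℝ) * θ)
        calc |Real.cos θ| ^ k * |Real.cos ((n:ℝ) * θ)| ≤ 1 ^ k * 1 := by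
              apply mul_le_mul (pow_le_pow_left₀ (abs_nonneg _) ‹_› k) ‹_› (abs_nonneg _) (by norm_num)
        _ = 1 := by norm_num
      have h2 : (0:ℝ) ≤ a ^ k / (k.factorial : ℝ) := by positivity
      calc ‖F k θ‖ = |a ^ k / (k.factorial : ℝ)| * |Real.cos θ ^ k * Real.cos (n * θ)| := by
            rw [Real.norm_eq_abs]
            exact abs_mul _ _
      _ ≤ |a ^ k / (k.factorial : ℝ)| * 1 := by
            exact mul_le_mul_of_nonneg_left h1 (abs_nonneg _)
      _ = a ^ k / (k.factorial : ℝ) := by rw [mul_one, abs_of_nonneg h2]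
    · filter_upwards with θ _
      exact NormedSpace.expSeries_div_summable a
    · exact intervalIntegrable_const
    · filter_upwards with θ _
      have h := NormedSpace.expSeries_div_hasSum_exp (a * Real.cos θ)
      have h2 := h.mul_right (Real.cos (n * θ))
      rw [← Real.exp_eq_exp_ℝ] at h2
      have hfun : (fun k => F k θ) = fun i => (a * Real.cos θ) ^ i / ↑i.factorial * Real.cos (n * θ) := by
        funext k
        rw [hF]
        simp only [mul_pow]
        ring
      rw [hfun]
      exact h2
  have hterm : ∀ k, ∫ θ in (0:ℝ)..π, F k θ = a ^ k / (k.factorial : ℝ) * chebJ k n := by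
    intro k
    rw [hF, intervalIntegral.integral_const_mul]
    rfl
  have hnonneg : ∀ k, 0 ≤ ∫ θ in (0:ℝ)..π, F k θ := by
    intro k
    rw [hterm k]
    have := chebJ_nonneg k n
    positivity
  have hle : a ^ n / (n.factorial : ℝ) * chebJ n n ≤
      ∫ θ in (0:ℝ)..π, Real.exp (a * Real.cos θ) * Real.cos (n * θ) := by
    rw [← hterm n]
    exact le_hasSum hsum n (fun k _ => hnonneg k)
  calc π * (a / 2) ^ n / (n.factorial : ℝ)
      = a ^ n / (n.factorial : ℝ) * (π / 2 ^ n) := by rw [div_pow]; ring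
    _ ≤ a ^ n / (n.factorial : ℝ) * chebJ n n := by
        apply mul_le_mul_of_nonneg_left (chebJ_diag n) (by positivity)
    _ ≤ _ := hle

lemma poly_orth (p : Polynomial ℝ) (d : ℕ) (hp : p.natDegree ≤ d) :
    ∫ θ in (0:ℝ)..π, p.eval (Real.cos θ) * Real.cos ((d+1 : ℕ) * θ) = 0 := by
  have key : ∀ θ : ℝ, p.eval (Real.cos θ) * Real.cos ((d+1 : ℕ) * θ)
      = ∑ j ∈ Finset.range (d+1), p.coeff j * (Real.cos θ ^ j * Real.cos ((d+1 : ℕ) * θ)) := by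
    intro θ
    rw [Polynomial.eval_eq_sum_range' (lt_of_le_of_lt hp (Nat.lt_succ_self d)), Finset.sum_mul]
    congr 1 with j
    ring
  rw [intervalIntegral.integral_congr (fun θ _ => key θ),
    intervalIntegral.integral_finset_sum
      (fun j _ => (show Continuous (fun θ : ℝ => p.coeff j * (Real.cos θ ^ j * Real.cos ((d+1 : ℕ) * θ))) from continuous_const.mul (chebJ_cont j (d+1))).intervalIntegrable _ _)]
  apply Finset.sum_eq_zero
  intro j hj
  rw [intervalIntegral.integral_const_mul]
  have : chebJ j (d+1) = 0 := chebJ_eq_zero j (d+1) (by simpa using Finset.mem_range.mp hj)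
  rw [chebJ] at this
  rw [this, mul_zero]

/-- Chebyshev-coefficient lower bound for approximating `g(x) = exp (a*(x-1))` on `[-1,1]`:
`E_d(g) ≥ (π e^{-a} / 2) · (a/2)^{d+1} / (d+1)!`. -/
theorem stmt3 (a : ℝ) (ha : 0 < a) (d : ℕ) :
    Real.pi * Real.exp (-a) / 2 * ((a / 2) ^ (d + 1) / ((d + 1).factorial : ℝ)) ≤
      bestApproxError (fun x => Real.exp (a * (x - 1))) d := by
  set n : ℕ := d + 1 with hn
  set g : ℝ → ℝ := fun x => Real.exp (a * (x - 1)) with hg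
  set c : ℝ := Real.pi * Real.exp (-a) / 2 * ((a / 2) ^ n / (n.factorial : ℝ)) with hc
  haveI : Nonempty {p : Polynomial ℝ // p.natDegree ≤ d} := ⟨⟨0, by simp⟩⟩
  rw [bestApproxError]
  apply le_ciInf
  rintro ⟨p, hp⟩
  set M : ℝ := ⨆ x : Set.Icc (-1:ℝ) 1, |g (x : ℝ) - p.eval (x : ℝ)| with hM
  show c ≤ M
  -- boundedness of the sup
  have hgc : Continuous g := by fun_prop
  have hcont : Continuous fun x : ℝ => |g x - p.eval x| :=
    (hgc.sub p.continuous).abs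
  have hbdd : BddAbove (Set.range fun x : Set.Icc (-1:ℝ) 1 => |g (x:ℝ) - p.eval (x:ℝ)|) := by
    have h1 := (isCompact_Icc (a := (-1:ℝ)) (b := 1)).bddAbove_image hcont.continuousOn
    rwa [Set.image_eq_range] at h1
  have hMle : ∀ θ : ℝ, |g (Real.cos θ) - p.eval (Real.cos θ)| ≤ M := by
    intro θ
    have hmem : Real.cos θ ∈ Set.Icc (-1:ℝ) 1 := ⟨Real.neg_one_le_cos θ, Real.cos_le_one θ⟩
    exact le_ciSup hbdd (⟨Real.cos θ, hmem⟩ : Set.Icc (-1:ℝ) 1)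
  have hM0 : 0 ≤ M := le_trans (abs_nonneg _) (hMle 0)
  -- the integral of g against cos(nθ)
  have hgint : Real.pi * Real.exp (-a) * ((a / 2) ^ n / (n.factorial : ℝ)) ≤
      ∫ θ in (0:ℝ)..π, g (Real.cos θ) * Real.cos (n * θ) := by
    have h1 := exp_cos_integral_ge a ha n
    have h2 : ∀ θ : ℝ, g (Real.cos θ) * Real.cos (n * θ)
        = Real.exp (-a) * (Real.exp (a * Real.cos θ) * Real.cos (n * θ)) := by
      intro θ
      rw [hg]
      simp only
      rw [show a * (Real.cos θ - 1) = -a + a * Real.cos θ by ring, Real.exp_add]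
      ring
    rw [intervalIntegral.integral_congr (fun θ _ => h2 θ),
      intervalIntegral.integral_const_mul]
    calc Real.pi * Real.exp (-a) * ((a / 2) ^ n / (n.factorial : ℝ))
        = Real.exp (-a) * (Real.pi * (a / 2) ^ n / (n.factorial : ℝ)) := by ring
      _ ≤ Real.exp (-a) * ∫ θ in (0:ℝ)..π, Real.exp (a * Real.cos θ) * Real.cos (n * θ) :=
          mul_le_mul_of_nonneg_left h1 (Real.exp_nonneg _)
  -- subtract the polynomial
  have hcn : Continuous fun θ : ℝ => Real.cos ((n:ℝ) * θ) :=
    Real.continuous_cos.comp (continuous_const.mul continuous_id)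
  have hint1 : IntervalIntegrable (fun θ => g (Real.cos θ) * Real.cos (n * θ)) volume 0 π :=
    ((hgc.comp Real.continuous_cos).mul hcn).intervalIntegrable _ _
  have hint2 : IntervalIntegrable (fun θ => p.eval (Real.cos θ) * Real.cos (n * θ)) volume 0 π :=
    ((p.continuous.comp Real.continuous_cos).mul hcn).intervalIntegrable _ _
  have hsub : ∫ θ in (0:ℝ)..π, (g (Real.cos θ) - p.eval (Real.cos θ)) * Real.cos (n * θ)
      = ∫ θ in (0:ℝ)..π, g (Real.cos θ) * Real.cos (n * θ) := by
    have := poly_orth p d hp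
    rw [intervalIntegral.integral_congr
      (g := fun θ => g (Real.cos θ) * Real.cos (n * θ) - p.eval (Real.cos θ) * Real.cos (n * θ))
      (fun θ _ => by ring), intervalIntegral.integral_sub hint1 hint2, this, sub_zero]
  -- upper bound by 2M
  have hupper : ∫ θ in (0:ℝ)..π, (g (Real.cos θ) - p.eval (Real.cos θ)) * Real.cos (n * θ)
      ≤ 2 * M := by
    have hmono : ∫ θ in (0:ℝ)..π, (g (Real.cos θ) - p.eval (Real.cos θ)) * Real.cos (n * θ)
        ≤ ∫ θ in (0:ℝ)..π, M * |Real.cos (n * θ)| := by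
      apply intervalIntegral.integral_mono_on Real.pi_nonneg
      · exact ((hgc.comp Real.continuous_cos).sub
          (p.continuous.comp Real.continuous_cos)).mul hcn |>.intervalIntegrable _ _
      · exact (continuous_const.mul (continuous_abs.comp hcn)).intervalIntegrable _ _
      · intro θ _
        calc (g (Real.cos θ) - p.eval (Real.cos θ)) * Real.cos (n * θ)
            ≤ |(g (Real.cos θ) - p.eval (Real.cos θ)) * Real.cos (n * θ)| := le_abs_self _
          _ = |g (Real.cos θ) - p.eval (Real.cos θ)| * |Real.cos (n * θ)| := abs_mul _ _
          _ ≤ M * |Real.cos (n * θ)| :=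
              mul_le_mul_of_nonneg_right (hMle θ) (abs_nonneg _)
    rw [intervalIntegral.integral_const_mul, integral_abs_cos_nat_mul n (by omega)] at hmono
    linarith
  -- combine
  have h2c : 2 * c = Real.pi * Real.exp (-a) * ((a / 2) ^ n / (n.factorial : ℝ)) := by
    rw [hc]; ring
  rw [hsub] at hupper
  have : 2 * c ≤ 2 * M := by
    rw [h2c]; exact le_trans hgint hupper
  linarith
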